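/- Let A, B be Hermitian forms with B positive definite on V, let E = span{ψ¹,…,ψˡ} be spanned by l B-orthonormal eigenvectors with A(ψⁱ, v) = λⁱ B(ψⁱ, v) for all v ∈ V and 0 < λ¹ ≤ … ≤ λˡ, let X be a subspace with A-orthogonal projection Π onto X, and assume Π is injective on E. Then the l-th discrete minimax eigenvalue λ_N^l over X satisfies λ_N^l ≤ λˡ · max_{0≠v∈E} B(v,v)/B(Πv, Πv). -/

import Mathlib

open Complex

lemma sesq_expand {V : Type*} [AddCommGroup V] [Module ℂ V]
    (A : V →ₗ⋆[ℂ] V →ₗ[ℂ] ℂ) {m : ℕ} (c : Fin m → ℂ) (e f : Fin m → V) :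
    A (∑ i, c i • e i) (∑ j, c j • f j)
      = ∑ i, ∑ j, (starRingEnd ℂ) (c i) * c j * A (e i) (f j) := by
  rw [map_sum]
  simp only [LinearMap.map_smulₛₗ, LinearMap.sum_apply, LinearMap.smul_apply, map_sum, map_smul,
    Finset.smul_sum, smul_eq_mul, Finset.mul_sum]
  rw [Finset.sum_comm]
  exact Finset.sum_congr rfl fun i _ => Finset.sum_congr rfl fun j _ => by ring

/-- upper bound for the discrete minimax eigenvalue via the projected
eigenspace. Here `l = n + 1`. -/
theorem stmt7 {V : Type*} [NormedAddCommGroup V] [InnerProductSpace ℂ V]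
    (A B : V →ₗ⋆[ℂ] V →ₗ[ℂ] ℂ)
    (hAherm : ∀ x y : V, A y x = (starRingEnd ℂ) (A x y))
    (hBherm : ∀ x y : V, B y x = (starRingEnd ℂ) (B x y))
    (hApos : ∀ x : V, 0 ≤ (A x x).re)
    (hBpos : ∀ x : V, x ≠ 0 → 0 < (B x x).re)
    (n : ℕ) (ψ : Fin (n + 1) → V) (lam : Fin (n + 1) → ℝ)
    (hBon : ∀ i j, B (ψ i) (ψ j) = if i = j then 1 else 0)
    (heig : ∀ i, ∀ v : V, A (ψ i) v = (lam i : ℂ) * B (ψ i) v)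
    (hpos : ∀ i, 0 < lam i) (hmono : Monotone lam)
    (X : Submodule ℂ V) [FiniteDimensional ℂ X]
    (P : V →ₗ[ℂ] V) (hPmem : ∀ u : V, P u ∈ X)
    (hPorth : ∀ u : V, ∀ v ∈ X, A (u - P u) v = 0)
    (hinj : Set.InjOn P (Submodule.span ℂ (Set.range ψ) : Set V)) :
    sInf {t : ℝ | ∃ W : Submodule ℂ V, W ≤ X ∧ Module.finrank ℂ W = n + 1 ∧
        t = sSup {s : ℝ | ∃ v ∈ W, v ≠ 0 ∧ s = (A v v).re / (B v v).re}}
    ≤ lam (Fin.last n) *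
      sSup {s : ℝ | ∃ v ∈ Submodule.span ℂ (Set.range ψ), v ≠ 0 ∧
        s = (B v v).re / (B (P v) (P v)).re} := by
  set E := Submodule.span ℂ (Set.range ψ) with hE
  haveI : FiniteDimensional ℂ E := FiniteDimensional.span_of_finite ℂ (Set.finite_range ψ)
  have hψmem : ∀ i, ψ i ∈ E := fun i => Submodule.subset_span ⟨i, rfl⟩
  have hψ0ne : ψ 0 ≠ 0 := by
    intro h
    have := hBon 0 0
    rw [h] at this
    simp at this
  have hPne : ∀ v ∈ E, v ≠ 0 → P v ≠ 0 := by
    intro v hv hne h0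
    exact hne (hinj hv (Submodule.zero_mem E) (by rw [h0, map_zero]))
  have hBnn : ∀ v : V, 0 ≤ (B v v).re := by
    intro v
    by_cases h : v = 0
    · simp [h]
    · exact (hBpos v h).le
  -- linear independence
  have hli : LinearIndependent ℂ ψ := by
    rw [Fintype.linearIndependent_iff]
    intro g hg j
    have h := congrArg (fun w => B (ψ j) w) hg
    simpa [map_sum, map_smul, hBon, smul_eq_mul, Finset.sum_ite_eq'] using h
  have hrankE : Module.finrank ℂ E = n + 1 := by
    rw [hE, finrank_span_eq_card hli, Fintype.card_fin]
  -- the discrete space W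
  set W : Submodule ℂ V := E.map P with hW
  have hWX : W ≤ X := by
    rintro x hx
    obtain ⟨u, hu, rfl⟩ := hx
    exact hPmem u
  have hrankW : Module.finrank ℂ W = n + 1 := by
    have hfinj : Function.Injective (P.domRestrict E) := by
      intro x y hxy
      exact Subtype.ext (hinj x.2 y.2 hxy)
    have hrange : LinearMap.range (P.domRestrict E) = W := by
      rw [LinearMap.domRestrict, LinearMap.range_comp, Submodule.range_subtype]
    rw [← hrange, LinearMap.finrank_range_of_inj hfinj, hrankE]
  -- A-projection inequality
  have hAproj : ∀ v : V, (A (P v) (P v)).re ≤ (A v v).re := by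
    intro v
    have h1 : A (v - P v) (P v) = 0 := hPorth v (P v) (hPmem v)
    have h2 : A (P v) (v - P v) = 0 := by
      rw [hAherm (v - P v) (P v), h1, map_zero]
    have hdecomp : A v v = A (P v) (P v) + A (v - P v) (v - P v) := by
      have hv : v = P v + (v - P v) := by abel
      calc A v v = A (P v + (v - P v)) (P v + (v - P v)) := by rw [← hv]
        _ = A (P v) (P v) + A (P v) (v - P v) + (A (v - P v) (P v) + A (v - P v) (v - P v)) := by
            rw [map_add]; simp only [LinearMap.add_apply, map_add]; ring
        _ = A (P v) (P v) + A (v - P v) (v - P v) := by rw [h1, h2]; ring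
    rw [hdecomp, Complex.add_re]
    linarith [hApos (v - P v)]
  -- eigenvalue bound on E
  have hAB : ∀ v ∈ E, (A v v).re ≤ lam (Fin.last n) * (B v v).re := by
    intro v hv
    obtain ⟨c, rfl⟩ := (Submodule.mem_span_range_iff_exists_fun ℂ).mp hv
    have hAe : A (∑ i, c i • ψ i) (∑ j, c j • ψ j)
        = ∑ i, ((Complex.normSq (c i) : ℂ) * (lam i : ℂ)) := by
      rw [sesq_expand]
      refine Finset.sum_congr rfl fun i _ => ?_
      simp only [heig, hBon, mul_ite, mul_one, mul_zero, Finset.sum_ite_eq, Finset.mem_univ,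
        if_true]
      rw [mul_comm ((starRingEnd ℂ) (c i)) (c i), Complex.mul_conj]
    have hBe : B (∑ i, c i • ψ i) (∑ j, c j • ψ j)
        = ∑ i, (Complex.normSq (c i) : ℂ) := by
      rw [sesq_expand]
      refine Finset.sum_congr rfl fun i _ => ?_
      simp only [hBon, mul_ite, mul_one, mul_zero, Finset.sum_ite_eq, Finset.mem_univ, if_true]
      rw [mul_comm ((starRingEnd ℂ) (c i)) (c i), Complex.mul_conj]
    rw [hAe, hBe]
    rw [Complex.re_sum, Complex.re_sum]
    simp only [← Complex.ofReal_mul, Complex.ofReal_re]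
    rw [Finset.mul_sum]
    refine Finset.sum_le_sum fun i _ => ?_
    rw [mul_comm (lam (Fin.last n))]
    exact mul_le_mul_of_nonneg_left (hmono (Fin.le_last i)) (Complex.normSq_nonneg _)
  -- continuity and compactness: the Rayleigh quotient set on E is bounded above
  set T := {s : ℝ | ∃ v ∈ E, v ≠ 0 ∧ s = (B v v).re / (B (P v) (P v)).re} with hT
  set b := Module.finBasis ℂ E with hb
  have hrep : ∀ v : E, (v : V) = ∑ i, b.repr v i • ((b i : E) : V) := by
    intro v
    have h := b.sum_repr v
    calc (v : V) = ((∑ i, b.repr v i • b i : E) : V) := by rw [h]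
      _ = ∑ i, b.repr v i • ((b i : E) : V) := by push_cast; rfl
  have hcoord : ∀ i, Continuous fun v : E => b.repr v i := fun i =>
    (b.coord i).continuous_of_finiteDimensional
  have hcont1 : Continuous fun v : E => (B (v : V) (v : V)).re := by
    have heq : (fun v : E => B (v : V) (v : V)) = fun v : E =>
        ∑ i, ∑ j, (starRingEnd ℂ) (b.repr v i) * b.repr v j * B ((b i : E) : V) ((b j : E) : V) := by
      funext v
      conv_lhs => rw [hrep v]
      rw [sesq_expand]
    refine Complex.continuous_re.comp ?_
    rw [heq]
    exact continuous_finset_sum _ fun i _ => continuous_finset_sum _ fun j _ =>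
      ((RCLike.continuous_conj.comp (hcoord i)).mul (hcoord j)).mul continuous_const
  have hrepP : ∀ v : E, P (v : V) = ∑ i, b.repr v i • P ((b i : E) : V) := by
    intro v
    conv_lhs => rw [hrep v]
    rw [map_sum]
    simp only [map_smul]
  have hcont2 : Continuous fun v : E => (B (P (v : V)) (P (v : V))).re := by
    have heq : (fun v : E => B (P (v : V)) (P (v : V))) = fun v : E =>
        ∑ i, ∑ j, (starRingEnd ℂ) (b.repr v i) * b.repr v j *
          B (P ((b i : E) : V)) (P ((b j : E) : V)) := by
      funext v
      rw [hrepP v, sesq_expand]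
    refine Complex.continuous_re.comp ?_
    rw [heq]
    exact continuous_finset_sum _ fun i _ => continuous_finset_sum _ fun j _ =>
      ((RCLike.continuous_conj.comp (hcoord i)).mul (hcoord j)).mul continuous_const
  haveI : Nontrivial E :=
    ⟨⟨ψ 0, hψmem 0⟩, 0, fun h => hψ0ne (by simpa using congrArg Subtype.val h)⟩
  have hsubne : ∀ v : E, v ∈ Metric.sphere (0 : E) 1 → (v : V) ≠ 0 := by
    intro v hv h0
    have hv0 : v = 0 := Subtype.ext h0
    rw [hv0] at hv
    simp at hv
  obtain ⟨v0, hv0mem, hv0max⟩ := (isCompact_sphere (0 : E) 1).exists_isMaxOn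
    (NormedSpace.sphere_nonempty.mpr zero_le_one)
    (ContinuousOn.div hcont1.continuousOn hcont2.continuousOn fun v hv =>
      (hBpos _ (hPne _ (v : E).2 (hsubne v hv))).ne')
  have hTbdd : BddAbove T := by
    refine ⟨(B (v0 : V) (v0 : V)).re / (B (P (v0 : V)) (P (v0 : V))).re, ?_⟩
    rintro s ⟨v, hvE, hvne, rfl⟩
    have hr : 0 < ‖v‖ := norm_pos_iff.mpr hvne
    set u : E := ((‖v‖⁻¹ : ℝ) : ℂ) • (⟨v, hvE⟩ : E) with hu
    have hue : (u : V) = ((‖v‖⁻¹ : ℝ) : ℂ) • v := rfl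
    have hunorm : ‖u‖ = 1 := by
      rw [hu, norm_smul]
      have h1 : ‖((‖v‖⁻¹ : ℝ) : ℂ)‖ = ‖v‖⁻¹ := by
        rw [Complex.norm_real, Real.norm_eq_abs, _root_.abs_of_nonneg (inv_nonneg.mpr hr.le)]
      have h2 : ‖(⟨v, hvE⟩ : E)‖ = ‖v‖ := rfl
      rw [h1, h2, inv_mul_cancel₀ hr.ne']
    have humem : u ∈ Metric.sphere (0 : E) 1 := by
      simpa using hunorm
    have key := hv0max humem
    have hc2 : ((‖v‖⁻¹ : ℝ)^2 : ℝ) ≠ 0 := by positivity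
    have hscale : ∀ w : V, (B (((‖v‖⁻¹ : ℝ) : ℂ) • w) (((‖v‖⁻¹ : ℝ) : ℂ) • w)).re
        = (‖v‖⁻¹ : ℝ)^2 * (B w w).re := by
      intro w
      have e1 : B ((((‖v‖⁻¹ : ℝ) : ℂ)) • w) = (starRingEnd ℂ) (((‖v‖⁻¹ : ℝ) : ℂ)) • B w :=
        LinearMap.map_smulₛₗ B _ w
      rw [e1, LinearMap.smul_apply, map_smul]
      simp only [smul_eq_mul, Complex.conj_ofReal]
      rw [← mul_assoc, ← Complex.ofReal_mul, Complex.re_ofReal_mul]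
      ring
    have hBu : (B (u : V) (u : V)).re = (‖v‖⁻¹ : ℝ)^2 * (B v v).re := by
      rw [hue]; exact hscale v
    have hBPu : (B (P (u : V)) (P (u : V))).re = (‖v‖⁻¹ : ℝ)^2 * (B (P v) (P v)).re := by
      rw [hue, map_smul]; exact hscale (P v)
    calc (B v v).re / (B (P v) (P v)).re
        = (B (u : V) (u : V)).re / (B (P (u : V)) (P (u : V))).re := by
          rw [hBu, hBPu, mul_div_mul_left _ _ hc2]
      _ ≤ _ := key
  -- final assembly
  have hbddBelow : BddBelow {t : ℝ | ∃ W : Submodule ℂ V, W ≤ X ∧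
      Module.finrank ℂ W = n + 1 ∧
      t = sSup {s : ℝ | ∃ v ∈ W, v ≠ 0 ∧ s = (A v v).re / (B v v).re}} := by
    refine ⟨0, ?_⟩
    rintro t ⟨W', hW'X, hrk, rfl⟩
    exact Real.sSup_nonneg fun s hs => by
      obtain ⟨v, hvW, hvne, rfl⟩ := hs
      exact div_nonneg (hApos v) (hBnn v)
  have hTnn : 0 ≤ sSup T := Real.sSup_nonneg fun s hs => by
    obtain ⟨v, hvE, hvne, rfl⟩ := hs
    exact div_nonneg (hBnn v) (hBnn (P v))
  refine le_trans (csInf_le hbddBelow ⟨W, hWX, hrankW, rfl⟩) ?_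
  refine Real.sSup_le ?_ (mul_nonneg (hpos _).le hTnn)
  rintro s ⟨w, hwW, hwne, rfl⟩
  obtain ⟨v, hvE, rfl⟩ := hwW
  have hvne : v ≠ 0 := fun h => hwne (by rw [h, map_zero])
  have hBw : 0 < (B (P v) (P v)).re := hBpos _ hwne
  calc (A (P v) (P v)).re / (B (P v) (P v)).re
      ≤ (A v v).re / (B (P v) (P v)).re := by gcongr ?_ / _; exact hAproj v
    _ ≤ (lam (Fin.last n) * (B v v).re) / (B (P v) (P v)).re := by gcongr; exact hAB v hvE
    _ = lam (Fin.last n) * ((B v v).re / (B (P v) (P v)).re) := mul_div_assoc _ _ _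
    _ ≤ lam (Fin.last n) * sSup T := by
        refine mul_le_mul_of_nonneg_left ?_ (hpos _).le
        exact le_csSup hTbdd ⟨v, hvE, hvne, rfl⟩
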